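/- Fix s ≥ 3 and let (G_i)_{i≥0} be the K_{2,s}-bootstrap process on an n-vertex graph G with n ≥ s + 2, and let i ≥ 0. (i) If A, B ⊆ V(G) are disjoint sets such that any two vertices of A have at least s − 1 common neighbours in G_i, any two vertices of B have at least s − 1 common neighbours in G_i, and there is at least one edge of G_i between A and B, then in G_{i+2} every vertex of A is adjacent to every vertex of B. (ii) If C ⊆ V(G) is a set such that any two vertices of C have at least s − 1 common neighbours in G_i and G_i has at least one edge inside C, then C is a clique in G_{i+2}. -/
import Mathlib


open SimpleGraph

/-- The number of subgraphs of `G` isomorphic to `H`. -/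
noncomputable def numCopies {α β : Type*} (H : SimpleGraph α) (G : SimpleGraph β) : ℕ :=
  {G' : G.Subgraph | Nonempty (G'.coe ≃g H)}.ncard

/-- One step of the `H`-bootstrap process: add every missing edge whose addition
creates a new copy of `H`. -/
noncomputable def bootStep {α β : Type*} (H : SimpleGraph α) (G : SimpleGraph β) :
    SimpleGraph β :=
  G ⊔ SimpleGraph.fromRel (fun u v =>
    numCopies H G < numCopies H (G ⊔ SimpleGraph.fromEdgeSet {s(u, v)}))

/-- The `H`-bootstrap process `(G_i)_{i ≥ 0}` on the starting graph `G`. -/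
noncomputable def bootProcess {α β : Type*} (H : SimpleGraph α) (G : SimpleGraph β) :
    ℕ → SimpleGraph β
  | 0 => G
  | i + 1 => bootStep H (bootProcess H G i)

/-- The running time `τ_H(G)` of the `H`-bootstrap process on `G`. -/
noncomputable def runningTime {α β : Type*} (H : SimpleGraph α) (G : SimpleGraph β) : ℕ :=
  sInf {t | bootProcess H G t = bootProcess H G (t + 1)}

/-- `M_H(n)`, the maximum running time of the `H`-bootstrap process over all
`n`-vertex starting graphs. -/
noncomputable def maxRunningTime {α : Type*} (H : SimpleGraph α) (n : ℕ) : ℕ :=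
  sSup {t | ∃ G : SimpleGraph (Fin n), runningTime H G = t}

section helper

variable {V : Type} [Fintype V]

lemma subgraph_finite (G : SimpleGraph V) : Finite G.Subgraph := by
  classical
  apply Finite.of_injective (fun A : G.Subgraph => (A.verts, A.Adj))
  intro A B h
  exact SimpleGraph.Subgraph.ext (congrArg Prod.fst h) (congrArg Prod.snd h)

lemma numCopies_lt {α : Type*} (H : SimpleGraph α) (G G' : SimpleGraph V) (hle : G ≤ G')
    (K : G'.Subgraph) (hK : Nonempty (K.coe ≃g H)) {x y : V} (hxy : K.Adj x y)
    (hG : ¬ G.Adj x y) : numCopies H G < numCopies H G' := by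
  classical
  have := subgraph_finite G'
  set φ : G.Subgraph → G'.Subgraph := fun A =>
    ⟨A.verts, A.Adj, fun h => hle (A.adj_sub h), A.edge_vert, A.symm⟩ with hφ
  have hinj : Function.Injective φ := by
    intro A B h
    exact SimpleGraph.Subgraph.ext (congrArg (fun X => X.verts) h)
      (congrArg (fun X => X.Adj) h)
  have hss : φ '' {A : G.Subgraph | Nonempty (A.coe ≃g H)} ⊂
      {A : G'.Subgraph | Nonempty (A.coe ≃g H)} := by
    constructor
    · rintro _ ⟨A, hA, rfl⟩
      exact hA
    · intro hsub
      have hKim : K ∈ φ '' {A : G.Subgraph | Nonempty (A.coe ≃g H)} := hsub hK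
      obtain ⟨A, _, hAK⟩ := hKim
      have : A.Adj x y := by rw [← hAK] at hxy; exact hxy
      exact hG (A.adj_sub this)
  calc numCopies H G = (φ '' {A : G.Subgraph | Nonempty (A.coe ≃g H)}).ncard :=
        (Set.ncard_image_of_injective _ hinj).symm
    _ < numCopies H G' := Set.ncard_lt_ncard hss (Set.toFinite _)

lemma key_adj (s : ℕ) (hs : 1 ≤ s) (G : SimpleGraph V) {u v w : V}
    (huv : u ≠ v) (huw : u ≠ w) (hwv : G.Adj w v)
    (hcn : s - 1 ≤ (G.neighborSet u ∩ G.neighborSet w).ncard) :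
    (bootStep (completeBipartiteGraph (Fin 2) (Fin s)) G).Adj u v := by
  classical
  by_cases hadj : G.Adj u v
  · exact SimpleGraph.sup_adj .. |>.mpr (Or.inl hadj)
  set H := completeBipartiteGraph (Fin 2) (Fin s) with hH
  set G' := G ⊔ SimpleGraph.fromEdgeSet {s(u, v)} with hG'
  have hle : G ≤ G' := le_sup_left
  obtain ⟨S, hSsub, hScard⟩ := Set.exists_subset_card_eq hcn
  have hvS : v ∉ S := fun h => hadj (hSsub h).1
  have huS : u ∉ S := fun h => G.irrefl (hSsub h).1
  have hwS : w ∉ S := fun h => G.irrefl (hSsub h).2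
  set T : Set V := insert v S with hT
  have huT : u ∉ T := by
    simp only [hT, Set.mem_insert_iff]
    push_neg
    exact ⟨huv, huS⟩
  have hwT : w ∉ T := by
    simp only [hT, Set.mem_insert_iff]
    push_neg
    exact ⟨hwv.ne, hwS⟩
  have hTcard : Fintype.card T = s := by
    have h1 : T.ncard = s := by
      rw [hT, Set.ncard_insert_of_notMem hvS (Set.toFinite S), hScard]
      omega
    rw [← Nat.card_coe_set_eq] at h1
    rwa [← Nat.card_eq_fintype_card]
  set e : Fin s ≃ T := (Fintype.equivFinOfCardEq hTcard).symm with he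
  set f : Fin 2 ⊕ Fin s → V :=
    Sum.elim (fun a => if a = 0 then u else w) (fun j => ((e j : T) : V)) with hf
  have hfl : ∀ a : Fin 2, f (Sum.inl a) = u ∨ f (Sum.inl a) = w := by
    intro a
    by_cases h : a = 0 <;> simp [hf, h]
  have hflT : ∀ a : Fin 2, f (Sum.inl a) ∉ T := by
    intro a
    rcases hfl a with h | h <;> rw [h] <;> assumption
  have hfrT : ∀ b : Fin s, f (Sum.inr b) ∈ T := fun b => (e b).2
  have hfinj : Function.Injective f := by
    rintro (a | a) (b | b) h
    · congr 1
      by_contra hab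
      have : (a = 0 ∧ b ≠ 0) ∨ (a ≠ 0 ∧ b = 0) := by omega
      rcases this with ⟨h1, h2⟩ | ⟨h1, h2⟩ <;> simp [hf, h1, h2] at h
      · exact huw h
      · exact huw h.symm
    · exact absurd (h ▸ hfrT b) (hflT a)
    · exact absurd (h.symm ▸ hfrT a) (hflT b)
    · congr 1
      exact e.injective (Subtype.coe_injective h)
  have hmap : ∀ {p q : Fin 2 ⊕ Fin s}, H.Adj p q → G'.Adj (f p) (f q) := by
    have base : ∀ (a : Fin 2) (b : Fin s), G'.Adj (f (Sum.inl a)) (f (Sum.inr b)) := by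
      have base' : ∀ x y : V, (x = u ∨ x = w) → y ∈ T → G'.Adj x y := by
        intro x y hx hy
        rw [hT, Set.mem_insert_iff] at hy
        rcases hx with rfl | rfl <;> rcases hy with rfl | h2
        · exact SimpleGraph.sup_adj .. |>.mpr
            (Or.inr (by rw [SimpleGraph.fromEdgeSet_adj]; exact ⟨rfl, huv⟩))
        · exact hle (hSsub h2).1
        · exact hle hwv
        · exact hle (hSsub h2).2
      intro a b
      exact base' _ _ (hfl a) (hfrT b)
    rintro (p | p) (q | q) hpq <;> simp [hH] at hpq
    · exact base p q
    · exact (base q p).symm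
  set f' : H →g G' := ⟨f, hmap⟩ with hf'
  set K : G'.Subgraph := SimpleGraph.Subgraph.map f' ⊤ with hK
  have hKverts : K.verts = Set.range f := by
    simp [hK, Set.image_univ]
    rfl
  have happ : ∀ a : K.verts, f ((Equiv.ofInjective f hfinj).symm (Equiv.setCongr hKverts a)) = a := by
    intro a
    exact Equiv.apply_ofInjective_symm hfinj _
  have hiso : Nonempty (K.coe ≃g H) := by
    refine ⟨⟨(Equiv.setCongr hKverts).trans (Equiv.ofInjective f hfinj).symm, ?_⟩⟩
    intro a b
    simp only [Equiv.trans_apply]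
    constructor
    · intro hadj'
      refine ⟨_, _, hadj', ?_, ?_⟩ <;> exact happ _
    · rintro ⟨p, q, hpq, hp, hq⟩
      have hp' : p = (Equiv.ofInjective f hfinj).symm (Equiv.setCongr hKverts a) := by
        apply hfinj; rw [happ]; exact hp
      have hq' : q = (Equiv.ofInjective f hfinj).symm (Equiv.setCongr hKverts b) := by
        apply hfinj; rw [happ]; exact hq
      rw [hp', hq'] at hpq
      exact SimpleGraph.Subgraph.top_adj.mp hpq
  have hKuv : K.Adj u v := by
    refine ⟨Sum.inl 0, Sum.inr (e.symm ⟨v, Set.mem_insert v S⟩), ?_, ?_, ?_⟩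
    · simp [hH]
    · show Sum.elim (fun a => if a = 0 then u else w) (fun j => ((e j : T) : V)) (Sum.inl 0) = u
      simp
    · show Sum.elim (fun a => if a = 0 then u else w) (fun j => ((e j : T) : V))
        (Sum.inr (e.symm ⟨v, Set.mem_insert v S⟩)) = v
      simp
  have hlt : numCopies H G < numCopies H G' := numCopies_lt H G G' hle K hiso hKuv hadj
  refine SimpleGraph.sup_adj .. |>.mpr (Or.inr ?_)
  rw [SimpleGraph.fromRel_adj]
  exact ⟨huv, Or.inl hlt⟩

end helper

section main

variable {V : Type} [Fintype V]

lemma cn_mono {G G' : SimpleGraph V} (h : G ≤ G') (u w : V) :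
    (G.neighborSet u ∩ G.neighborSet w).ncard ≤
      (G'.neighborSet u ∩ G'.neighborSet w).ncard :=
  Set.ncard_le_ncard (Set.inter_subset_inter (fun _ hx => h hx) (fun _ hx => h hx))
    (Set.toFinite _)

end main

/-- In the `K_{2,s}`-bootstrap process (`s ≥ 3`) on an `n`-vertex graph
with `n ≥ s + 2`: (i) if `A` and `B` are disjoint sets such that any two distinct
vertices of the same set have at least `s − 1` common neighbours at time `i`, and there
is an edge between `A` and `B` at time `i`, then at time `i + 2` all edges between `A`
and `B` are present; (ii) if any two distinct vertices of a set `C` have at least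
`s − 1` common neighbours at time `i` and `G_i` has an edge inside `C`, then `C` is a
clique at time `i + 2`. -/
theorem blocks_merge {V : Type} [Fintype V] (s : ℕ) (hs : 3 ≤ s)
    (G : SimpleGraph V) (hn : s + 2 ≤ Fintype.card V) (i : ℕ) :
    (∀ A B : Set V, Disjoint A B →
      (∀ x ∈ A, ∀ y ∈ A, x ≠ y → s - 1 ≤
        ((bootProcess (completeBipartiteGraph (Fin 2) (Fin s)) G i).neighborSet x ∩
          (bootProcess (completeBipartiteGraph (Fin 2) (Fin s)) G i).neighborSet y).ncard) →
      (∀ x ∈ B, ∀ y ∈ B, x ≠ y → s - 1 ≤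
        ((bootProcess (completeBipartiteGraph (Fin 2) (Fin s)) G i).neighborSet x ∩
          (bootProcess (completeBipartiteGraph (Fin 2) (Fin s)) G i).neighborSet y).ncard) →
      (∃ a ∈ A, ∃ b ∈ B,
        (bootProcess (completeBipartiteGraph (Fin 2) (Fin s)) G i).Adj a b) →
      ∀ a ∈ A, ∀ b ∈ B,
        (bootProcess (completeBipartiteGraph (Fin 2) (Fin s)) G (i + 2)).Adj a b) ∧
    (∀ C : Set V,
      (∀ x ∈ C, ∀ y ∈ C, x ≠ y → s - 1 ≤
        ((bootProcess (completeBipartiteGraph (Fin 2) (Fin s)) G i).neighborSet x ∩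
          (bootProcess (completeBipartiteGraph (Fin 2) (Fin s)) G i).neighborSet y).ncard) →
      (∃ a ∈ C, ∃ b ∈ C,
        (bootProcess (completeBipartiteGraph (Fin 2) (Fin s)) G i).Adj a b) →
      (bootProcess (completeBipartiteGraph (Fin 2) (Fin s)) G (i + 2)).IsClique C) := by
  have hs1 : 1 ≤ s := by omega
  set H := completeBipartiteGraph (Fin 2) (Fin s) with hH
  set Gi := bootProcess H G i with hGi
  have hG1 : bootProcess H G (i + 1) = bootStep H Gi := rfl
  set G1 := bootStep H Gi with hG1'
  have hG2 : bootProcess H G (i + 2) = bootStep H G1 := by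
    show bootStep H (bootProcess H G (i + 1)) = _
    rw [hG1]
  have hle01 : Gi ≤ G1 := le_sup_left
  have hle12 : G1 ≤ bootStep H G1 := le_sup_left
  constructor
  · intro A B hdisj hA hB ⟨a0, ha0, b0, hb0, hab⟩ a ha b hb
    have hne : ∀ x ∈ A, ∀ y ∈ B, x ≠ y := by
      intro x hx y hy h
      subst h
      exact Set.disjoint_left.mp hdisj hx hy
    have claimB : ∀ b' ∈ B, G1.Adj b' a0 := by
      intro b' hb'
      by_cases h : b' = b0
      · subst h; exact hle01 hab.symm
      · exact key_adj s hs1 Gi (hne a0 ha0 b' hb').symm h hab.symm (hB b' hb' b0 hb0 h)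
    rw [hG2]
    by_cases h : a = a0
    · subst h; exact hle12 (claimB b hb).symm
    · exact key_adj s hs1 G1 (hne a ha b hb) h (claimB b hb).symm
        (le_trans (hA a ha a0 ha0 h) (cn_mono hle01 a a0))
  · intro C hC ⟨a0, ha0, b0, hb0, hab⟩
    have claim1 : ∀ c ∈ C, c ≠ a0 → G1.Adj c a0 := by
      intro c hc hca
      by_cases h : c = b0
      · subst h; exact hle01 hab.symm
      · exact key_adj s hs1 Gi hca h hab.symm (hC c hc b0 hb0 h)
    rw [hG2]
    intro x hx y hy hxy
    by_cases hya : y = a0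
    · subst hya
      exact hle12 (claim1 x hx hxy)
    · by_cases hxa : x = a0
      · subst hxa
        exact (hle12 (claim1 y hy hya)).symm
      · exact key_adj s hs1 G1 hxy hxa (claim1 y hy hya).symm
          (le_trans (hC x hx a0 ha0 hxa) (cn_mono hle01 x a0))
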